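/- Let m be a power of two and n = m/2. The power basis 1, ζ_m, ζ_m², ..., ζ_m^{n-1} of ℤ[ζ_m] is orthogonal with respect to the Minkowski inner product ⟨α, β⟩ = Σ_σ σ(α)·conj(σ(β)) (sum over all complex embeddings σ of ℚ(ζ_m)), and each basis vector has squared norm n. In particular ⟨ζ_m^i, ζ_m^j⟩ = 0 for 0 ≤ i < j ≤ n-1. -/

import Mathlib

theorem stmt_7 (m : ℕ+) (hm : ∃ N : ℕ, (m : ℕ) = 2 ^ N) (hm4 : 4 ≤ (m : ℕ))
    (n : ℕ) (hn : n = (m : ℕ) / 2)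
    (K : Type*) [Field K] [Algebra ℚ K] [IsCyclotomicExtension {(m : ℕ)} ℚ K] [NumberField K]
    (ζ : K) (hζ : IsPrimitiveRoot ζ (m : ℕ)) :
    (∀ i : ℕ, i ≤ n - 1 →
      ∑ σ : K →+* ℂ, σ (ζ ^ i) * (starRingEnd ℂ) (σ (ζ ^ i)) = (n : ℂ)) ∧
    (∀ i j : ℕ, i < j → j ≤ n - 1 →
      ∑ σ : K →+* ℂ, σ (ζ ^ i) * (starRingEnd ℂ) (σ (ζ ^ j)) = 0) := by
  obtain ⟨N, hN⟩ := hm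
  have hm0 : (m : ℕ) ≠ 0 := by omega
  have hmpos : 0 < (m : ℕ) := by omega
  have hN2 : 2 ≤ N := by
    by_contra h
    interval_cases N <;> omega
  have hζm : ζ ^ (m : ℕ) = 1 := hζ.pow_eq_one
  -- each embedding sends powers of ζ to numbers of norm 1
  have key1 : ∀ (σ : K →+* ℂ) (t : ℕ),
      σ (ζ ^ t) * (starRingEnd ℂ) (σ (ζ ^ t)) = 1 := by
    intro σ t
    have h1 : (σ (ζ ^ t)) ^ (m : ℕ) = 1 := by
      rw [← map_pow, ← pow_mul, mul_comm, pow_mul, hζm, one_pow, map_one]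
    have habs : ‖σ (ζ ^ t)‖ = 1 :=
      Complex.norm_eq_one_of_pow_eq_one h1 hm0
    rw [Complex.mul_conj]
    rw [Complex.normSq_eq_norm_sq, habs]
    norm_num
  have hirr : Irreducible (Polynomial.cyclotomic ((m : ℕ+) : ℕ) ℚ) :=
    Polynomial.cyclotomic.irreducible_rat hmpos
  have hn' : n = 2 ^ (N - 1) := by
    have h2 : (2:ℕ) ^ N = 2 ^ (N - 1) * 2 := by
      rw [← pow_succ]
      congr 1
      omega
    rw [hn, hN, h2, Nat.mul_div_cancel _ (by norm_num)]
  have hnpos : 2 ≤ n := by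
    rw [hn']
    calc (2:ℕ) = 2 ^ 1 := rfl
    _ ≤ 2 ^ (N - 1) := Nat.pow_le_pow_right (by norm_num) (by omega)
  have hrank : Module.finrank ℚ K = n := by
    rw [IsCyclotomicExtension.finrank K hirr, hN, hn',
      Nat.totient_prime_pow Nat.prime_two (by omega : 0 < N)]
    simp
  constructor
  · intro i _
    calc ∑ σ : K →+* ℂ, σ (ζ ^ i) * (starRingEnd ℂ) (σ (ζ ^ i))
        = ∑ _σ : K →+* ℂ, (1 : ℂ) := Finset.sum_congr rfl fun σ _ => key1 σ i
      _ = (Fintype.card (K →+* ℂ) : ℂ) := by simp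
      _ = (n : ℂ) := by
          have hcard : Fintype.card (K →+* ℂ) = n := by
            rw [NumberField.Embeddings.card K ℂ]
            convert hrank using 2 <;> exact Subsingleton.elim _ _
          rw [hcard]
  · intro i j hij hj
    set a : ℕ := (m : ℕ) with ha
    set e : ℕ := i + (a - 1) * j with he
    set d : ℕ := j - i with hd
    have hjn : j < n := by omega
    have hda : d < a := by
      have : n ≤ a := by omega
      omega
    have hd1 : 1 ≤ d := by omega
    -- conj (σ (ζ^j)) = σ (ζ^((a-1)*j))
    have hjm : ζ ^ j * ζ ^ ((a - 1) * j) = 1 := by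
      rw [← pow_add]
      have hm1 : j + (a - 1) * j = a * j := by
        have : (a - 1) * j = a * j - j := by rw [Nat.sub_mul, one_mul]
        have hja : j ≤ a * j := Nat.le_mul_of_pos_left j (by omega)
        omega
      rw [hm1, pow_mul, hζm, one_pow]
    have hconj : ∀ σ : K →+* ℂ, (starRingEnd ℂ) (σ (ζ ^ j)) = σ (ζ ^ ((a - 1) * j)) := by
      intro σ
      have h2 : σ (ζ ^ j) * σ (ζ ^ ((a - 1) * j)) = 1 := by
        rw [← map_mul, hjm, map_one]
      have h1 := key1 σ j
      have hne : σ (ζ ^ j) ≠ 0 := by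
        intro h
        rw [h, zero_mul] at h1
        exact one_ne_zero h1.symm
      exact mul_left_cancel₀ hne (h1.trans h2.symm)
    have hsum : ∑ σ : K →+* ℂ, σ (ζ ^ i) * (starRingEnd ℂ) (σ (ζ ^ j))
        = ∑ σ : K →+* ℂ, σ (ζ ^ e) := by
      refine Finset.sum_congr rfl fun σ _ => ?_
      rw [hconj σ, ← map_mul, ← pow_add]
    rw [hsum]
    -- compute e % a = a - d
    have hema : e % a = a - d := by
      have hee : e = (a - d) + a * (j - 1) := by
        have h1 : (a - 1) * j = a * j - j := by rw [Nat.sub_mul, one_mul]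
        have h2 : a * (j - 1) = a * j - a := by rw [Nat.mul_sub, mul_one]
        have hja : a ≤ a * j := Nat.le_mul_of_pos_right a (by omega)
        have hja' : j ≤ a * j := Nat.le_mul_of_pos_left j (by omega)
        omega
      rw [hee, Nat.add_mul_mod_self_left, Nat.mod_eq_of_lt (by omega)]
    -- gcd a e = gcd a d
    have hgcd : Nat.gcd a e = Nat.gcd a d := by
      have h1 : Nat.gcd a e = Nat.gcd a (a - d) := by
        rw [Nat.gcd_rec a e, hema, Nat.gcd_comm]
      rw [h1]
      apply Nat.dvd_antisymm
      · exact Nat.dvd_gcd (Nat.gcd_dvd_left _ _)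
          (by simpa [Nat.sub_sub_self hda.le] using
            Nat.dvd_sub (Nat.gcd_dvd_left a (a - d)) (Nat.gcd_dvd_right a (a - d)))
      · exact Nat.dvd_gcd (Nat.gcd_dvd_left _ _)
          (Nat.dvd_sub (Nat.gcd_dvd_left a d) (Nat.gcd_dvd_right a d))
    -- g = 2^s with s ≤ N - 2
    obtain ⟨s, hsN, hs⟩ := (Nat.dvd_prime_pow Nat.prime_two).mp
      (hN ▸ Nat.gcd_dvd_left a d : Nat.gcd a d ∣ 2 ^ N)
    have hgd : Nat.gcd a d ≤ d := Nat.le_of_dvd (by omega) (Nat.gcd_dvd_right a d)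
    have hdn : d < 2 ^ (N - 1) := by omega
    have hsN2 : s ≤ N - 2 := by
      by_contra hcon
      have hs1 : N - 1 ≤ s := by omega
      have : 2 ^ (N - 1) ≤ 2 ^ s := Nat.pow_le_pow_right (by norm_num) hs1
      omega
    -- order of ζ^e
    have hordζ : orderOf ζ = a := (hζ.eq_orderOf).symm
    have hene : e ≠ 0 := by
      have : 1 ≤ (a - 1) * j := Nat.one_le_iff_ne_zero.mpr
        (Nat.mul_ne_zero (by omega) (by omega))
      omega
    set k : ℕ := orderOf (ζ ^ e) with hk
    have hkval : k = 2 ^ (N - s) := by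
      rw [hk, orderOf_pow' ζ hene, hordζ, hgcd, hs, hN, Nat.pow_div (by omega) (by norm_num)]
    have hk4 : 4 ∣ k := by
      rw [hkval]
      have : (2:ℕ) ^ 2 ∣ 2 ^ (N - s) := Nat.pow_dvd_pow 2 (by omega)
      simpa using this
    have hkpos : 0 < k := by
      rw [hkval]; positivity
    -- η^(k/2) = -1
    have hη2 : (ζ ^ e) ^ (k / 2) = -1 := by
      have hhalf : k / 2 + k / 2 = k := by omega
      have hsq : (ζ ^ e) ^ (k / 2) * (ζ ^ e) ^ (k / 2) = 1 := by
        rw [← pow_add, hhalf, pow_orderOf_eq_one]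
      rcases mul_self_eq_one_iff.mp hsq with h | h
      · exfalso
        have hdvd : k ∣ k / 2 := orderOf_dvd_of_pow_eq_one h
        have := Nat.le_of_dvd (by omega) hdvd
        omega
      · exact h
    -- the automorphism sending ζ to ζ^(1 + k/2)
    set u : ℕ := 1 + k / 2 with hu
    have hucop : Nat.Coprime u a := by
      have hu2 : Nat.Coprime u 2 := by
        rw [Nat.coprime_comm]
        rw [Nat.Prime.coprime_iff_not_dvd Nat.prime_two]
        omega
      rw [hN]
      exact Nat.Coprime.pow_right N hu2
    have hmem : ζ ^ u ∈ primitiveRoots ((m : ℕ+) : ℕ) K := by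
      rw [mem_primitiveRoots hmpos]
      exact hζ.pow_of_coprime u hucop
    set φ : K →ₐ[ℚ] K := (hζ.embeddingsEquivPrimitiveRoots K hirr).symm ⟨ζ ^ u, hmem⟩ with hφ
    have hφζ : φ ζ = ζ ^ u := by
      have := hζ.embeddingsEquivPrimitiveRoots_apply_coe K hirr φ
      rw [hφ, Equiv.apply_symm_apply] at this
      rw [hφ, ← this]
    have hφη : φ (ζ ^ e) = -(ζ ^ e) := by
      rw [map_pow, hφζ, ← pow_mul, mul_comm, pow_mul, hu, pow_add, pow_one, hη2]
      ring
    -- reindex the sum by composition with φ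
    have hφbij : Function.Bijective φ := Algebra.IsAlgebraic.algHom_bijective φ
    set ψ : (K →+* ℂ) → (K →+* ℂ) := fun σ => σ.comp (φ : K →+* K) with hψ
    have hψinj : Function.Injective ψ := by
      intro σ σ' h
      ext x
      obtain ⟨y, rfl⟩ := hφbij.surjective x
      exact congrArg (fun f => f y) h
    have hψbij : Function.Bijective ψ := Finite.injective_iff_bijective.mp hψinj
    have hre : ∑ σ : K →+* ℂ, σ (φ (ζ ^ e)) = ∑ σ : K →+* ℂ, σ (ζ ^ e) :=
      Fintype.sum_bijective ψ hψbij _ _ (fun σ => rfl)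
    have hneg : ∑ σ : K →+* ℂ, σ (ζ ^ e) = -∑ σ : K →+* ℂ, σ (ζ ^ e) :=
      calc ∑ σ : K →+* ℂ, σ (ζ ^ e) = ∑ σ : K →+* ℂ, σ (φ (ζ ^ e)) := hre.symm
        _ = ∑ σ : K →+* ℂ, -(σ (ζ ^ e)) :=
            Finset.sum_congr rfl fun σ _ => by rw [hφη, map_neg]
        _ = -∑ σ : K →+* ℂ, σ (ζ ^ e) := by rw [Finset.sum_neg_distrib]
    linear_combination hneg / 2
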